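/- Suppose (x*_I, x*_C) ∈ X_MO maximizes z̄ᵏ(C_I^{1:ℓ} x_I + C_C^{1:ℓ} x_C) − (c⁰_I·x_I + c⁰_C·x_C) over X_MO, and let ζ* = C_I^{1:ℓ} x*_I + C_C^{1:ℓ} x*_C. Then z(ζ*) = z̄(ζ*; x*_I); that is, ζ* belongs to the stability region 𝒞(x*_I) = {ζ ∈ 𝒞 : z(ζ) = z̄(ζ; x*_I)}, which is therefore nonempty. -/

import Mathlib

open Matrix Filter Topology Set

noncomputable section

/-- Primal feasibility for the restricted LP with data `(ζ, β)`. -/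
def LPfeas {l m nc : ℕ} (CC : Matrix (Fin l) (Fin nc) ℝ) (AC : Matrix (Fin m) (Fin nc) ℝ)
    (ζ : Fin l → ℝ) (β : Fin m → ℝ) (x : Fin nc → ℝ) : Prop :=
  (∀ j, 0 ≤ x j) ∧ CC.mulVec x ≤ ζ ∧ AC.mulVec x = β

/-- The restricted LP value function, taking the value `+∞` when infeasible. -/
def zLP {l m nc : ℕ} (cC : Fin nc → ℝ) (CC : Matrix (Fin l) (Fin nc) ℝ)
    (AC : Matrix (Fin m) (Fin nc) ℝ) (ζ : Fin l → ℝ) (β : Fin m → ℝ) : EReal :=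
  sInf {y : EReal | ∃ x : Fin nc → ℝ, LPfeas CC AC ζ β x ∧ y = ((cC ⬝ᵥ x : ℝ) : EReal)}

/-- The finite domain (feasibility region) of the restricted LP value function. -/
def CLP {l m nc : ℕ} (CC : Matrix (Fin l) (Fin nc) ℝ) (AC : Matrix (Fin m) (Fin nc) ℝ)
    (β : Fin m → ℝ) : Set (Fin l → ℝ) :=
  {ζ | ∃ x : Fin nc → ℝ, LPfeas CC AC ζ β x}

/-- The dual feasible region `P_D`. -/
def PD {l m nc : ℕ} (cC : Fin nc → ℝ) (CC : Matrix (Fin l) (Fin nc) ℝ)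
    (AC : Matrix (Fin m) (Fin nc) ℝ) : Set ((Fin l → ℝ) × (Fin m → ℝ)) :=
  {uv | uv.1 ≤ 0 ∧ CC.transpose.mulVec uv.1 + AC.transpose.mulVec uv.2 ≤ cC}

/-- Projection of the optimal face of the dual LP onto the `u`-coordinates. -/
def projOPT {l m nc : ℕ} (cC : Fin nc → ℝ) (CC : Matrix (Fin l) (Fin nc) ℝ)
    (AC : Matrix (Fin m) (Fin nc) ℝ) (ζ : Fin l → ℝ) (β : Fin m → ℝ) : Set (Fin l → ℝ) :=
  {u | ∃ v : Fin m → ℝ, (u, v) ∈ PD cC CC AC ∧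
    ((ζ ⬝ᵥ u + β ⬝ᵥ v : ℝ) : EReal) = zLP cC CC AC ζ β}

/-- A real vector with natural-number entries. -/
def IsNatVec {r : ℕ} (x : Fin r → ℝ) : Prop := ∀ i, ∃ k : ℕ, x i = (k : ℝ)

/-- The MILP feasible region `X_MO`. -/
def XMO {m nc r : ℕ} (AI : Matrix (Fin m) (Fin r) ℝ) (AC : Matrix (Fin m) (Fin nc) ℝ)
    (b : Fin m → ℝ) : Set ((Fin r → ℝ) × (Fin nc → ℝ)) :=
  {p | IsNatVec p.1 ∧ (∀ j, 0 ≤ p.2 j) ∧ AI.mulVec p.1 + AC.mulVec p.2 = b}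

/-- The restricted feasible region `S(ζ)`. -/
def Sreg {l m nc r : ℕ} (AI : Matrix (Fin m) (Fin r) ℝ) (AC : Matrix (Fin m) (Fin nc) ℝ)
    (b : Fin m → ℝ) (CI : Matrix (Fin l) (Fin r) ℝ) (CC : Matrix (Fin l) (Fin nc) ℝ)
    (ζ : Fin l → ℝ) : Set ((Fin r → ℝ) × (Fin nc → ℝ)) :=
  {p ∈ XMO AI AC b | CI.mulVec p.1 + CC.mulVec p.2 ≤ ζ}

/-- The restricted value function `z`, taking the value `+∞` when `S(ζ) = ∅`. -/
def zRVF {l m nc r : ℕ} (cI : Fin r → ℝ) (cC : Fin nc → ℝ) (AI : Matrix (Fin m) (Fin r) ℝ)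
    (AC : Matrix (Fin m) (Fin nc) ℝ) (b : Fin m → ℝ) (CI : Matrix (Fin l) (Fin r) ℝ)
    (CC : Matrix (Fin l) (Fin nc) ℝ) (ζ : Fin l → ℝ) : EReal :=
  sInf {y : EReal | ∃ p ∈ Sreg AI AC b CI CC ζ, y = ((cI ⬝ᵥ p.1 + cC ⬝ᵥ p.2 : ℝ) : EReal)}

/-- The finite domain `𝒞` of the restricted value function. -/
def Cdom {l m nc r : ℕ} (AI : Matrix (Fin m) (Fin r) ℝ) (AC : Matrix (Fin m) (Fin nc) ℝ)
    (b : Fin m → ℝ) (CI : Matrix (Fin l) (Fin r) ℝ) (CC : Matrix (Fin l) (Fin nc) ℝ) :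
    Set (Fin l → ℝ) :=
  {ζ | (Sreg AI AC b CI CC ζ).Nonempty}

/-- The set `S_I` of integer parts of feasible solutions. -/
def SI {m nc r : ℕ} (AI : Matrix (Fin m) (Fin r) ℝ) (AC : Matrix (Fin m) (Fin nc) ℝ)
    (b : Fin m → ℝ) : Set (Fin r → ℝ) :=
  {xI | ∃ xC : Fin nc → ℝ, (xI, xC) ∈ XMO AI AC b}

/-- The bounding function `z̄(ζ; x̂_I)`. -/
def zbar {l m nc r : ℕ} (cI : Fin r → ℝ) (cC : Fin nc → ℝ) (AI : Matrix (Fin m) (Fin r) ℝ)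
    (AC : Matrix (Fin m) (Fin nc) ℝ) (b : Fin m → ℝ) (CI : Matrix (Fin l) (Fin r) ℝ)
    (CC : Matrix (Fin l) (Fin nc) ℝ) (ζ : Fin l → ℝ) (xI : Fin r → ℝ) : EReal :=
  ((cI ⬝ᵥ xI : ℝ) : EReal) + zLP cC CC AC (ζ - CI.mulVec xI) (b - AI.mulVec xI)

/-- The set `S*_I(ζ)` of integer parts whose bounding function is active at `ζ`. -/
def SstarI {l m nc r : ℕ} (cI : Fin r → ℝ) (cC : Fin nc → ℝ) (AI : Matrix (Fin m) (Fin r) ℝ)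
    (AC : Matrix (Fin m) (Fin nc) ℝ) (b : Fin m → ℝ) (CI : Matrix (Fin l) (Fin r) ℝ)
    (CC : Matrix (Fin l) (Fin nc) ℝ) (ζ : Fin l → ℝ) : Set (Fin r → ℝ) :=
  {xI ∈ SI AI AC b | zbar cI cC AI AC b CI CC ζ xI = zRVF cI cC AI AC b CI CC ζ}

/-- A description of the restricted value function. -/
def IsDescription {l m nc r : ℕ} (cI : Fin r → ℝ) (cC : Fin nc → ℝ)
    (AI : Matrix (Fin m) (Fin r) ℝ) (AC : Matrix (Fin m) (Fin nc) ℝ) (b : Fin m → ℝ)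
    (CI : Matrix (Fin l) (Fin r) ℝ) (CC : Matrix (Fin l) (Fin nc) ℝ)
    (S : Set (Fin r → ℝ)) : Prop :=
  S ⊆ SI AI AC b ∧
  ∀ ζ ∈ Cdom AI AC b CI CC, ∃ xI ∈ S, ∃ xC : Fin nc → ℝ,
    (xI, xC) ∈ Sreg AI AC b CI CC ζ ∧
    ((cI ⬝ᵥ xI + cC ⬝ᵥ xC : ℝ) : EReal) = zRVF cI cC AI AC b CI CC ζ

/-- A minimal description of the restricted value function. -/
def IsMinimalDescription {l m nc r : ℕ} (cI : Fin r → ℝ) (cC : Fin nc → ℝ)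
    (AI : Matrix (Fin m) (Fin r) ℝ) (AC : Matrix (Fin m) (Fin nc) ℝ) (b : Fin m → ℝ)
    (CI : Matrix (Fin l) (Fin r) ℝ) (CC : Matrix (Fin l) (Fin nc) ℝ)
    (S : Set (Fin r → ℝ)) : Prop :=
  IsDescription cI cC AI AC b CI CC S ∧
  ∀ S' : Set (Fin r → ℝ), S' ⊂ S → ¬ IsDescription cI cC AI AC b CI CC S'

/-- One-sided directional derivative (as a limit in `EReal`). -/
def HasDirDeriv {l : ℕ} (f : (Fin l → ℝ) → EReal) (x d : Fin l → ℝ) (L : EReal) : Prop :=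
  Tendsto (fun t : ℝ => ((t⁻¹ : ℝ) : EReal) * (f (x + t • d) - f x)) (𝓝[>] (0 : ℝ)) (𝓝 L)

/-- The criterion-space vector `Cx ∈ ℝ^{ℓ+1}` of a feasible point. -/
def CritVec {l nc r : ℕ} (cI : Fin r → ℝ) (cC : Fin nc → ℝ) (CI : Matrix (Fin l) (Fin r) ℝ)
    (CC : Matrix (Fin l) (Fin nc) ℝ) (p : (Fin r → ℝ) × (Fin nc → ℝ)) : ℝ × (Fin l → ℝ) :=
  (cI ⬝ᵥ p.1 + cC ⬝ᵥ p.2, CI.mulVec p.1 + CC.mulVec p.2)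

/-- Efficient solutions of the multiobjective MILP. -/
def IsEfficient {l m nc r : ℕ} (cI : Fin r → ℝ) (cC : Fin nc → ℝ)
    (AI : Matrix (Fin m) (Fin r) ℝ) (AC : Matrix (Fin m) (Fin nc) ℝ) (b : Fin m → ℝ)
    (CI : Matrix (Fin l) (Fin r) ℝ) (CC : Matrix (Fin l) (Fin nc) ℝ)
    (p : (Fin r → ℝ) × (Fin nc → ℝ)) : Prop :=
  p ∈ XMO AI AC b ∧ ¬ ∃ q ∈ XMO AI AC b,
    CritVec cI cC CI CC q ≤ CritVec cI cC CI CC p ∧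
    CritVec cI cC CI CC q ≠ CritVec cI cC CI CC p

/-- The upper approximation `z̄ᵏ` built from a set `Sk` of integer parts and bound `U`. -/
def zbark {l m nc r : ℕ} (cI : Fin r → ℝ) (cC : Fin nc → ℝ) (AI : Matrix (Fin m) (Fin r) ℝ)
    (AC : Matrix (Fin m) (Fin nc) ℝ) (b : Fin m → ℝ) (CI : Matrix (Fin l) (Fin r) ℝ)
    (CC : Matrix (Fin l) (Fin nc) ℝ) (Sk : Set (Fin r → ℝ)) (U : ℝ) (ζ : Fin l → ℝ) : EReal :=
  min (sInf {y : EReal | ∃ xI ∈ Sk, y = zbar cI cC AI AC b CI CC ζ xI}) (U : EReal)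



lemma zLP_anti {l m nc : ℕ} (cC : Fin nc → ℝ) (CC : Matrix (Fin l) (Fin nc) ℝ)
    (AC : Matrix (Fin m) (Fin nc) ℝ) {ζ₁ ζ₂ : Fin l → ℝ} (β : Fin m → ℝ) (h : ζ₁ ≤ ζ₂) :
    zLP cC CC AC ζ₂ β ≤ zLP cC CC AC ζ₁ β := by
  apply sInf_le_sInf
  rintro y ⟨x, ⟨h1, h2, h3⟩, hy⟩
  exact ⟨x, ⟨h1, h2.trans h, h3⟩, hy⟩

lemma zbar_anti {l m nc r : ℕ} (cI : Fin r → ℝ) (cC : Fin nc → ℝ) (AI : Matrix (Fin m) (Fin r) ℝ)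
    (AC : Matrix (Fin m) (Fin nc) ℝ) (b : Fin m → ℝ) (CI : Matrix (Fin l) (Fin r) ℝ)
    (CC : Matrix (Fin l) (Fin nc) ℝ) {ζ₁ ζ₂ : Fin l → ℝ} (xI : Fin r → ℝ) (h : ζ₁ ≤ ζ₂) :
    zbar cI cC AI AC b CI CC ζ₂ xI ≤ zbar cI cC AI AC b CI CC ζ₁ xI := by
  unfold zbar
  refine add_le_add le_rfl (zLP_anti cC CC AC _ ?_)
  intro i
  simp only [Pi.sub_apply]
  exact sub_le_sub_right (h i) _

lemma zbark_anti {l m nc r : ℕ} (cI : Fin r → ℝ) (cC : Fin nc → ℝ) (AI : Matrix (Fin m) (Fin r) ℝ)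
    (AC : Matrix (Fin m) (Fin nc) ℝ) (b : Fin m → ℝ) (CI : Matrix (Fin l) (Fin r) ℝ)
    (CC : Matrix (Fin l) (Fin nc) ℝ) (Sk : Set (Fin r → ℝ)) (U : ℝ) {ζ₁ ζ₂ : Fin l → ℝ}
    (h : ζ₁ ≤ ζ₂) :
    zbark cI cC AI AC b CI CC Sk U ζ₂ ≤ zbark cI cC AI AC b CI CC Sk U ζ₁ := by
  unfold zbark
  refine min_le_min ?_ le_rfl
  apply le_sInf
  rintro y ⟨xI, hxI, rfl⟩
  exact le_trans (sInf_le ⟨xI, hxI, rfl⟩) (zbar_anti cI cC AI AC b CI CC xI h)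

theorem stmt_19 {l m nc r : ℕ} (cI : Fin r → ℝ) (cC : Fin nc → ℝ) (AI : Matrix (Fin m) (Fin r) ℝ)
    (AC : Matrix (Fin m) (Fin nc) ℝ) (b : Fin m → ℝ) (CI : Matrix (Fin l) (Fin r) ℝ)
    (CC : Matrix (Fin l) (Fin nc) ℝ)
    (hne : (XMO AI AC b).Nonempty) (hbdd : Bornology.IsBounded (XMO AI AC b))
    (hbot : ∀ (ζ : Fin l → ℝ) (β : Fin m → ℝ), zLP cC CC AC ζ β ≠ ⊥)
    (Sk : Set (Fin r → ℝ)) (hSk : Sk ⊆ SI AI AC b) (hSkfin : Sk.Finite)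
    (U : ℝ) (hU : ∀ ζ ∈ Cdom AI AC b CI CC, zRVF cI cC AI AC b CI CC ζ ≤ (U : EReal))
    (xs : (Fin r → ℝ) × (Fin nc → ℝ)) (hxs : xs ∈ XMO AI AC b)
    (hmax : ∀ p ∈ XMO AI AC b,
      zbark cI cC AI AC b CI CC Sk U (CI.mulVec p.1 + CC.mulVec p.2) - ((cI ⬝ᵥ p.1 + cC ⬝ᵥ p.2 : ℝ) : EReal) ≤
        zbark cI cC AI AC b CI CC Sk U (CI.mulVec xs.1 + CC.mulVec xs.2) - ((cI ⬝ᵥ xs.1 + cC ⬝ᵥ xs.2 : ℝ) : EReal)) :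
    zRVF cI cC AI AC b CI CC (CI.mulVec xs.1 + CC.mulVec xs.2) = zbar cI cC AI AC b CI CC (CI.mulVec xs.1 + CC.mulVec xs.2) xs.1 ∧
    (CI.mulVec xs.1 + CC.mulVec xs.2) ∈ {ζ ∈ Cdom AI AC b CI CC | zRVF cI cC AI AC b CI CC ζ = zbar cI cC AI AC b CI CC ζ xs.1} ∧
    {ζ ∈ Cdom AI AC b CI CC | zRVF cI cC AI AC b CI CC ζ = zbar cI cC AI AC b CI CC ζ xs.1}.Nonempty := by
  set ζs := CI.mulVec xs.1 + CC.mulVec xs.2 with hζs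
  have hxsS : xs ∈ Sreg AI AC b CI CC ζs := ⟨hxs, le_rfl⟩
  set W := zbark cI cC AI AC b CI CC Sk U ζs with hW
  have hWtop : W ≠ ⊤ := by
    intro h
    have := min_le_right (sInf {y : EReal | ∃ xI ∈ Sk, y = zbar cI cC AI AC b CI CC ζs xI}) (U : EReal)
    rw [← zbark, ← hW, h] at this
    exact (EReal.coe_ne_top U) (top_le_iff.mp this)
  have hWbot : W ≠ ⊥ := by
    intro h
    rw [hW, zbark] at h
    rcases min_eq_bot.mp h with h | h
    · set T := {y : EReal | ∃ xI ∈ Sk, y = zbar cI cC AI AC b CI CC ζs xI} with hT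
      have hTfin : T.Finite := by
        have : T = (fun xI => zbar cI cC AI AC b CI CC ζs xI) '' Sk := by
          ext y; constructor
          · rintro ⟨xI, hxI, rfl⟩; exact ⟨xI, hxI, rfl⟩
          · rintro ⟨xI, hxI, rfl⟩; exact ⟨xI, hxI, rfl⟩
        rw [this]; exact hSkfin.image _
      rcases eq_empty_or_nonempty T with hTe | hTne
      · rw [hTe] at h; simp at h
      · have hmem : sInf T ∈ T := Set.Nonempty.csInf_mem hTne hTfin
        rw [h] at hmem
        rcases hmem with ⟨xI, _, hb⟩
        rw [zbar] at hb
        rcases EReal.add_eq_bot_iff.mp hb.symm with h1 | h1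
        · exact (EReal.coe_ne_bot _) h1
        · exact hbot _ _ h1
    · exact (EReal.coe_ne_bot U) h
  obtain ⟨wr, hwr⟩ : ∃ wr : ℝ, W = (wr : EReal) := ⟨W.toReal, (EReal.coe_toReal hWtop hWbot).symm⟩
  have hkey : ∀ p ∈ Sreg AI AC b CI CC ζs, cI ⬝ᵥ xs.1 + cC ⬝ᵥ xs.2 ≤ cI ⬝ᵥ p.1 + cC ⬝ᵥ p.2 := by
    rintro p ⟨hpX, hpζ⟩
    have h1 : W ≤ zbark cI cC AI AC b CI CC Sk U (CI.mulVec p.1 + CC.mulVec p.2) :=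
      zbark_anti cI cC AI AC b CI CC Sk U hpζ
    have h2 := hmax p hpX
    have h3 : W - ((cI ⬝ᵥ p.1 + cC ⬝ᵥ p.2 : ℝ) : EReal) ≤ W - ((cI ⬝ᵥ xs.1 + cC ⬝ᵥ xs.2 : ℝ) : EReal) :=
      le_trans (EReal.sub_le_sub h1 le_rfl) h2
    rw [hwr, ← EReal.coe_sub, ← EReal.coe_sub, EReal.coe_le_coe_iff] at h3
    linarith
  have hz : zRVF cI cC AI AC b CI CC ζs = ((cI ⬝ᵥ xs.1 + cC ⬝ᵥ xs.2 : ℝ) : EReal) := by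
    apply le_antisymm
    · exact sInf_le ⟨xs, hxsS, rfl⟩
    · apply le_sInf
      rintro y ⟨p, hp, rfl⟩
      exact EReal.coe_le_coe_iff.mpr (hkey p hp)
  have hACxs : AC.mulVec xs.2 = b - AI.mulVec xs.1 := by
    have h := hxs.2.2; funext i; have := congrFun h i
    simp only [Pi.add_apply, Pi.sub_apply] at *; linarith
  have hzb : zbar cI cC AI AC b CI CC ζs xs.1 = ((cI ⬝ᵥ xs.1 + cC ⬝ᵥ xs.2 : ℝ) : EReal) := by
    apply le_antisymm
    · rw [zbar, EReal.coe_add]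
      have hfeas : LPfeas CC AC (ζs - CI.mulVec xs.1) (b - AI.mulVec xs.1) xs.2 := by
        refine ⟨hxs.2.1, ?_, hACxs⟩
        intro i; simp [hζs]
      have hmem2 : ((cC ⬝ᵥ xs.2 : ℝ) : EReal) ∈ {y : EReal | ∃ x : Fin nc → ℝ,
          LPfeas CC AC (ζs - CI.mulVec xs.1) (b - AI.mulVec xs.1) x ∧ y = ((cC ⬝ᵥ x : ℝ) : EReal)} :=
        ⟨xs.2, hfeas, rfl⟩
      exact add_le_add le_rfl (sInf_le hmem2)
    · rw [zbar, EReal.coe_add]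
      refine add_le_add le_rfl (le_sInf ?_)
      rintro y ⟨x, ⟨hx1, hx2, hx3⟩, rfl⟩
      have hmem : (xs.1, x) ∈ Sreg AI AC b CI CC ζs := by
        refine ⟨⟨hxs.1, hx1, ?_⟩, ?_⟩
        · funext i; have := congrFun hx3 i
          simp only [Pi.add_apply, Pi.sub_apply] at *; linarith
        · intro i; have := hx2 i
          simp only [Pi.add_apply, Pi.sub_apply] at *; linarith
      have := hkey _ hmem
      exact EReal.coe_le_coe_iff.mpr (by linarith)
  refine ⟨by rw [hz, hzb], ⟨⟨xs, hxsS⟩, by rw [hz, hzb]⟩, ⟨ζs, ⟨xs, hxsS⟩, by rw [hz, hzb]⟩⟩
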